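/- Let G be a graph that is bicycle-free at radius r, let w : E → {±1} be an edge-signing of G, and let G₂ be the associated 2-lift of G. Then G₂ is bicycle-free at radius r. -/

import Mathlib

open scoped Classical

namespace NearRamanujan

variable {V : Type*} [Fintype V] [DecidableEq V]

/-- The set of vertices within distance `r` of `v` in `G`. -/
noncomputable def ball (G : SimpleGraph V) (v : V) (r : ℕ) : Finset V :=
  Finset.univ.filter (fun u => ∃ p : G.Walk v u, p.length ≤ r)

/-- The number of edges of the subgraph of `G` induced on the vertex set `S`. -/
noncomputable def edgesWithin (G : SimpleGraph V) (S : Finset V) : ℕ :=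
  (G.edgeFinset.filter (fun e => ∀ x ∈ e, x ∈ S)).card

/-- `G` is bicycle-free at radius `r`: the subgraph induced on each radius-`r` ball
(which is a connected graph) contains at most one cycle, equivalently it has at most
as many edges as vertices. -/
def BicycleFree (G : SimpleGraph V) (r : ℕ) : Prop :=
  ∀ v : V, edgesWithin G (ball G v r) ≤ (ball G v r).card

/-- The value in `{±1}` of an edge-signing `σ : G.edgeSet → Bool` on `e` (`0` off the edges). -/
noncomputable def edgeSign (G : SimpleGraph V) (σ : G.edgeSet → Bool) (e : Sym2 V) : ℝ :=
  if h : e ∈ G.edgeSet then (if σ ⟨e, h⟩ then 1 else -1) else 0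

/-- The signed adjacency matrix of the edge-signing `σ` of `G`. -/
noncomputable def signedAdj (G : SimpleGraph V) (σ : G.edgeSet → Bool) : Matrix V V ℝ :=
  fun u v => if G.Adj u v then edgeSign G σ s(u, v) else 0

/-- The signed non-backtracking matrix of the edge-signing `σ` of `G`, indexed by
the darts (directed edges) of `G`. -/
noncomputable def nbMatrix (G : SimpleGraph V) (σ : G.edgeSet → Bool) :
    Matrix G.Dart G.Dart ℝ :=
  fun e f => if e.snd = f.fst ∧ f.snd ≠ e.fst then edgeSign G σ s(f.fst, f.snd) else 0



/-- The 2-lift of `G` associated to the edge-signing `σ` (`σ e = true` meaning sign `+1`,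
`σ e = false` meaning sign `-1`): vertices are `V × Bool`, and `(u, a)` is joined to
`(v, b)` when `{u,v}` is an edge and `b = a` for sign `+1`, `b = ¬a` for sign `-1`. -/
def twoLift (G : SimpleGraph V) (σ : Sym2 V → Bool) : SimpleGraph (V × Bool) where
  Adj p q := G.Adj p.1 q.1 ∧ q.2 = xor p.2 (!σ s(p.1, q.1))
  symm := ⟨by
    rintro ⟨u, a⟩ ⟨v, b⟩ ⟨h, hb⟩
    refine ⟨h.symm, ?_⟩
    dsimp only at hb ⊢
    have hs : s(v, u) = s(u, v) := Sym2.eq_swap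
    rw [hs]
    subst hb
    cases hσ : σ s(u, v) <;> cases a <;> simp [hσ]⟩
  loopless := ⟨by
    rintro ⟨u, a⟩ ⟨h, _⟩
    exact G.irrefl h⟩


section AuxLemmas
set_option linter.unusedSectionVars false
open SimpleGraph


/-- symmetric min of `f` on an unordered pair -/
noncomputable def minf (f : V → ℕ) : Sym2 V → ℕ :=
  Sym2.lift ⟨fun a b => min (f a) (f b), fun a b => by simp [min_comm]⟩

lemma exists_walk_avoid (G : SimpleGraph V) (S : Finset V) (u : V)
    (hdeg : ((G.edgeFinset.filter (fun e => ∀ x ∈ e, x ∈ S)).filter (fun e => u ∈ e)).card ≤ 1) :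
    ∀ (n : ℕ) {x y : V}, x ≠ u → y ≠ u → ∀ (p : G.Walk x y), p.length ≤ n →
      (∀ z ∈ p.support, z ∈ S) → ∃ q : G.Walk x y, ∀ z ∈ q.support, z ∈ S.erase u := by
  intro n
  induction n with
  | zero =>
    intro x y hx hy p hlen hsup
    have hnil : p.Nil := Walk.nil_iff_length_eq.mpr (Nat.le_zero.mp hlen)
    have hsupp : p.support = [x] := Walk.nil_iff_support_eq.mp hnil
    refine ⟨p, fun z hz => Finset.mem_erase.mpr ⟨?_, hsup z hz⟩⟩
    rw [hsupp] at hz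
    simp only [List.mem_singleton] at hz
    subst hz; exact hx
  | succ n ih =>
    intro x y hx hy p hlen hsup
    by_cases hu : u ∈ p.support
    · -- surgery
      have huS : u ∈ S := hsup u hu
      set p1 := p.takeUntil u hu with hp1
      set p2 := p.dropUntil u hu with hp2
      have hlen12 : p1.length + p2.length = p.length := by
        rw [← Walk.length_append, Walk.take_spec]
      have h1 : ¬ p1.reverse.Nil := by
        rw [Walk.nil_iff_length_eq, Walk.length_reverse]
        intro h0
        exact hx (Walk.eq_of_length_eq_zero h0)
      have h2 : ¬ p2.Nil := by
        rw [Walk.nil_iff_length_eq]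
        intro h0
        exact hy (Walk.eq_of_length_eq_zero h0).symm
      obtain ⟨a, ha, t1, ht1⟩ := Walk.not_nil_iff.mp h1
      obtain ⟨b, hb, t2, ht2⟩ := Walk.not_nil_iff.mp h2
      have hsub1 : ∀ z ∈ t1.support, z ∈ S := by
        intro z hz
        apply hsup
        apply Walk.support_takeUntil_subset p hu
        rw [← hp1]
        have : z ∈ p1.reverse.support := by
          rw [ht1, Walk.support_cons]
          exact List.mem_cons_of_mem _ hz
        rwa [Walk.support_reverse, List.mem_reverse] at this
      have hsub2 : ∀ z ∈ t2.support, z ∈ S := by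
        intro z hz
        apply hsup
        apply Walk.support_dropUntil_subset p hu
        rw [← hp2, ht2, Walk.support_cons]
        exact List.mem_cons_of_mem _ hz
      have hES : ∀ c, G.Adj u c → c ∈ S →
          s(u, c) ∈ (G.edgeFinset.filter (fun e => ∀ x ∈ e, x ∈ S)).filter
            (fun e => u ∈ e) := by
        intro c hadj hcS
        refine Finset.mem_filter.mpr ⟨Finset.mem_filter.mpr ⟨?_, ?_⟩, ?_⟩
        · exact mem_edgeFinset.mpr (G.mem_edgeSet.mpr hadj)
        · intro x hxm
          rcases Sym2.mem_iff.mp hxm with rfl | rfl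
          exacts [huS, hcS]
        · exact Sym2.mem_iff.mpr (Or.inl rfl)
      have haS : a ∈ S := hsub1 a t1.start_mem_support
      have hbS : b ∈ S := hsub2 b t2.start_mem_support
      have hab : a = b := by
        by_contra hne
        have hne' : s(u, a) ≠ s(u, b) := fun hc => hne (Sym2.congr_right.mp hc)
        have := Finset.one_lt_card.mpr ⟨_, hES a ha haS, _, hES b hb hbS, hne'⟩
        omega
      subst hab
      set q0 : G.Walk x y := t1.reverse.append t2 with hq0
      have hq0len : q0.length + 2 = p.length := by
        have e1 : p1.length = t1.length + 1 := by
          rw [← Walk.length_reverse, ht1, Walk.length_cons]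
        have e2 : p2.length = t2.length + 1 := by rw [ht2, Walk.length_cons]
        rw [hq0, Walk.length_append, Walk.length_reverse]
        omega
      have hq0sup : ∀ z ∈ q0.support, z ∈ S := by
        intro z hz
        rw [hq0, Walk.mem_support_append_iff] at hz
        rcases hz with hz | hz
        · rw [Walk.support_reverse, List.mem_reverse] at hz
          exact hsub1 z hz
        · exact hsub2 z hz
      exact ih hx hy q0 (by omega) hq0sup
    · exact ⟨p, fun z hz => Finset.mem_erase.mpr
        ⟨fun hzu => hu (hzu ▸ hz), hsup z hz⟩⟩

noncomputable def sumf (f : V → ℕ) : Sym2 V → ℕ :=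
  Sym2.lift ⟨fun a b => f a + f b, fun a b => by simp [add_comm]⟩

lemma filter_mem_pair {S : Finset V} {e : Sym2 V} {a b : V} (hab : a ≠ b)
    (ha : a ∈ S) (hb : b ∈ S) (he : e = s(a, b)) :
    S.filter (fun x => x ∈ e) = {a, b} := by
  subst he
  ext x
  simp only [Finset.mem_filter, Sym2.mem_iff, Finset.mem_insert, Finset.mem_singleton]
  constructor
  · rintro ⟨-, h⟩; exact h
  · rintro (rfl | rfl)
    exacts [⟨ha, Or.inl rfl⟩, ⟨hb, Or.inr rfl⟩]

lemma key (G : SimpleGraph V) (f : V → ℕ) :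
    ∀ (n : ℕ) (S : Finset V), S.card ≤ n →
      (∀ x ∈ S, ∀ y ∈ S, ∃ p : G.Walk x y, ∀ z ∈ p.support, z ∈ S) →
      (G.edgeFinset.filter (fun e => ∀ x ∈ e, x ∈ S)).card ≤ S.card →
      ∑ e ∈ G.edgeFinset.filter (fun e => ∀ x ∈ e, x ∈ S), minf f e ≤ ∑ u ∈ S, f u := by
  intro n
  induction n with
  | zero =>
    intro S hcard _ _
    have : S = ∅ := Finset.card_eq_zero.mp (Nat.le_zero.mp hcard)
    subst this
    have hempty : G.edgeFinset.filter (fun e => ∀ x ∈ e, x ∈ (∅ : Finset V)) = ∅ := by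
      apply Finset.eq_empty_of_forall_notMem
      intro e he
      rw [Finset.mem_filter] at he
      obtain ⟨heE, hxS⟩ := he
      exact absurd (hxS e.out.1 (Sym2.out_fst_mem e)) (by simp)
    rw [hempty]; simp
  | succ n ih =>
    intro S hcard hconn hE
    set ES := G.edgeFinset.filter (fun e => ∀ x ∈ e, x ∈ S) with hESdef
    have hpair : ∀ e ∈ ES, ∃ a b, a ≠ b ∧ a ∈ S ∧ b ∈ S ∧ e = s(a, b) := by
      intro e he
      rw [hESdef, Finset.mem_filter, SimpleGraph.mem_edgeFinset] at he
      revert he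
      induction e using Sym2.ind with
      | _ a b =>
        rintro ⟨heE, hxS⟩
        exact ⟨a, b, (G.mem_edgeSet.mp heE).ne, hxS a (Sym2.mem_iff.mpr (Or.inl rfl)),
          hxS b (Sym2.mem_iff.mpr (Or.inr rfl)), rfl⟩
    by_cases hdeg : ∃ u ∈ S, (ES.filter (fun e => u ∈ e)).card ≤ 1
    · obtain ⟨u, huS, hu1⟩ := hdeg
      by_cases hS1 : S.card ≤ 1
      · have hempty : ES = ∅ := by
          apply Finset.eq_empty_of_forall_notMem
          intro e he
          obtain ⟨a, b, hab, ha, hb, -⟩ := hpair e he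
          have := Finset.one_lt_card.mpr ⟨a, ha, b, hb, hab⟩
          omega
        rw [hempty]; simp
      · push_neg at hS1
        set S' := S.erase u with hS'def
        have hsub : G.edgeFinset.filter (fun e => ∀ x ∈ e, x ∈ S') =
            ES.filter (fun e => u ∉ e) := by
          rw [hESdef]
          ext e
          simp only [Finset.mem_filter, hS'def, Finset.mem_erase]
          constructor
          · rintro ⟨heE, hxS⟩
            exact ⟨⟨heE, fun x hx => (hxS x hx).2⟩, fun hue => (hxS u hue).1 rfl⟩
          · rintro ⟨⟨heE, hxS⟩, hue⟩
            exact ⟨heE, fun x hx => ⟨fun hxu => hue (hxu ▸ hx), hxS x hx⟩⟩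
        -- u has degree exactly 1
        have hd1 : 1 ≤ (ES.filter (fun e => u ∈ e)).card := by
          obtain ⟨y, hyS, hyu⟩ := Finset.exists_mem_ne hS1 u
          obtain ⟨p, hp⟩ := hconn u huS y hyS
          have hnp : ¬ p.Nil := by
            rw [SimpleGraph.Walk.nil_iff_length_eq]
            intro h0
            exact hyu (SimpleGraph.Walk.eq_of_length_eq_zero h0).symm
          obtain ⟨w, hw, t, ht⟩ := SimpleGraph.Walk.not_nil_iff.mp hnp
          have hwS : w ∈ S := by
            apply hp
            rw [ht, SimpleGraph.Walk.support_cons]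
            exact List.mem_cons_of_mem _ t.start_mem_support
          have : s(u, w) ∈ ES.filter (fun e => u ∈ e) := by
            refine Finset.mem_filter.mpr ⟨Finset.mem_filter.mpr ⟨?_, ?_⟩, ?_⟩
            · exact mem_edgeFinset.mpr (G.mem_edgeSet.mpr hw)
            · intro x hx
              rcases Sym2.mem_iff.mp hx with rfl | rfl
              exacts [huS, hwS]
            · exact Sym2.mem_iff.mpr (Or.inl rfl)
          exact Finset.card_pos.mpr ⟨_, this⟩
        have hdeq : (ES.filter (fun e => u ∈ e)).card = 1 := le_antisymm hu1 hd1
        have hsplit : (ES.filter (fun e => u ∈ e)).card +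
            (ES.filter (fun e => u ∉ e)).card = ES.card :=
          Finset.card_filter_add_card_filter_not _
        have hcard' : S'.card = S.card - 1 := Finset.card_erase_of_mem huS
        have hconn' : ∀ x ∈ S', ∀ y ∈ S', ∃ p : G.Walk x y, ∀ z ∈ p.support, z ∈ S' := by
          intro x hx y hy
          obtain ⟨hxu, hxS⟩ := Finset.mem_erase.mp hx
          obtain ⟨hyu, hyS⟩ := Finset.mem_erase.mp hy
          obtain ⟨p, hp⟩ := hconn x hxS y hyS
          exact exists_walk_avoid G S u hu1 p.length hxu hyu p le_rfl hp
        have hE' : (G.edgeFinset.filter (fun e => ∀ x ∈ e, x ∈ S')).card ≤ S'.card := by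
          rw [hsub, hcard']
          omega
        have hIH := ih S' (by omega) hconn' hE'
        rw [hsub] at hIH
        -- split the sum
        have hsum : ∑ e ∈ ES.filter (fun e => u ∈ e), minf f e +
            ∑ e ∈ ES.filter (fun e => u ∉ e), minf f e = ∑ e ∈ ES, minf f e :=
          Finset.sum_filter_add_sum_filter_not _ _ _
        have hbound : ∑ e ∈ ES.filter (fun e => u ∈ e), minf f e ≤ f u := by
          have := Finset.sum_le_card_nsmul (ES.filter (fun e => u ∈ e)) (minf f) (f u) ?_
          · rwa [hdeq, one_nsmul] at this
          · intro e he
            rw [Finset.mem_filter] at he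
            obtain ⟨heES, hue⟩ := he
            obtain ⟨a, b, hab, ha, hb, rfl⟩ := hpair e heES
            rcases Sym2.mem_iff.mp hue with rfl | rfl
            · exact min_le_left _ _
            · exact min_le_right _ _
        have hrhs : f u + ∑ x ∈ S', f x = ∑ x ∈ S, f x := Finset.add_sum_erase _ _ huS
        omega
    · push_neg at hdeg
      -- every vertex has degree ≥ 2 in the induced graph
      have hcard2 : ∀ e ∈ ES, (S.filter (fun x => x ∈ e)).card = 2 := by
        intro e he
        obtain ⟨a, b, hab, ha, hb, rfl⟩ := hpair e he
        rw [filter_mem_pair hab ha hb rfl]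
        exact Finset.card_pair hab
      have hhs : ∑ u ∈ S, (ES.filter (fun e => u ∈ e)).card = 2 * ES.card := by
        have h1 : ∑ u ∈ S, (ES.filter (fun e => u ∈ e)).card =
            ∑ e ∈ ES, (S.filter (fun x => x ∈ e)).card := by
          simp_rw [Finset.card_filter]
          rw [Finset.sum_comm]
        rw [h1, Finset.sum_congr rfl hcard2, Finset.sum_const, smul_eq_mul, mul_comm]
      have hge : 2 * S.card ≤ ∑ u ∈ S, (ES.filter (fun e => u ∈ e)).card := by
        calc 2 * S.card = S.card • 2 := by rw [smul_eq_mul, mul_comm]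
          _ ≤ _ := Finset.card_nsmul_le_sum _ _ _ (fun u hu => hdeg u hu)
      have hEeq : ES.card = S.card := le_antisymm hE (by omega)
      have hdeg2 : ∀ u ∈ S, (ES.filter (fun e => u ∈ e)).card = 2 := by
        intro u huS
        have h1 : (ES.filter (fun e => u ∈ e)).card +
            ∑ x ∈ S.erase u, (ES.filter (fun e => x ∈ e)).card =
            ∑ x ∈ S, (ES.filter (fun e => x ∈ e)).card := by
          exact Finset.add_sum_erase S (fun x => (Finset.filter (fun e => x ∈ e) ES).card) huS
        have h2 : (S.erase u).card • 2 ≤ ∑ x ∈ S.erase u, (ES.filter (fun e => x ∈ e)).card :=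
          Finset.card_nsmul_le_sum _ _ _ (fun x hx => hdeg x (Finset.mem_erase.mp hx).2)
        have h3 : (S.erase u).card = S.card - 1 := Finset.card_erase_of_mem huS
        have h4 := hdeg u huS
        have h5 : 1 ≤ S.card := Finset.card_pos.mpr ⟨u, huS⟩
        rw [hhs, hEeq] at h1
        rw [h3, smul_eq_mul] at h2
        omega
      have hw : ∑ e ∈ ES, sumf f e = ∑ u ∈ S, (ES.filter (fun e => u ∈ e)).card * f u := by
        have h1 : ∀ e ∈ ES, sumf f e = ∑ x ∈ S.filter (fun x => x ∈ e), f x := by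
          intro e he
          obtain ⟨a, b, hab, ha, hb, rfl⟩ := hpair e he
          rw [filter_mem_pair hab ha hb rfl, Finset.sum_pair hab]
          simp [sumf]
        rw [Finset.sum_congr rfl h1]
        simp_rw [Finset.sum_filter]
        rw [Finset.sum_comm]
        apply Finset.sum_congr rfl
        intro x hx
        rw [Finset.card_filter, Finset.sum_mul]
        apply Finset.sum_congr rfl
        intro e he
        split <;> simp
      have hperedge : ∀ e ∈ ES, 2 * minf f e ≤ sumf f e := by
        intro e he
        obtain ⟨a, b, hab, ha, hb, rfl⟩ := hpair e he
        have h1 : minf f s(a, b) = min (f a) (f b) := rfl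
        have h2 : sumf f s(a, b) = f a + f b := rfl
        rw [h1, h2]
        have := min_le_left (f a) (f b)
        have := min_le_right (f a) (f b)
        omega
      have hfinal : 2 * ∑ e ∈ ES, minf f e ≤ 2 * ∑ u ∈ S, f u := by
        calc 2 * ∑ e ∈ ES, minf f e = ∑ e ∈ ES, 2 * minf f e := by rw [Finset.mul_sum]
          _ ≤ ∑ e ∈ ES, sumf f e := Finset.sum_le_sum hperedge
          _ = ∑ u ∈ S, (ES.filter (fun e => u ∈ e)).card * f u := hw
          _ = ∑ u ∈ S, 2 * f u := Finset.sum_congr rfl (fun u hu => by rw [hdeg2 u hu])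
          _ = 2 * ∑ u ∈ S, f u := by rw [Finset.mul_sum]
      omega

lemma mem_ball {G : SimpleGraph V} {v x : V} {r : ℕ} :
    x ∈ ball G v r ↔ ∃ p : G.Walk v x, p.length ≤ r := by
  simp [ball]

lemma ball_connected (G : SimpleGraph V) (v : V) (r : ℕ) :
    ∀ x ∈ ball G v r, ∀ y ∈ ball G v r,
      ∃ p : G.Walk x y, ∀ z ∈ p.support, z ∈ ball G v r := by
  intro x hx y hy
  obtain ⟨px, hpx⟩ := mem_ball.mp hx
  obtain ⟨py, hpy⟩ := mem_ball.mp hy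
  refine ⟨px.reverse.append py, ?_⟩
  intro z hz
  rw [Walk.mem_support_append_iff] at hz
  have key : ∀ (q : G.Walk v z), q.length ≤ r → z ∈ ball G v r := fun q hq =>
    mem_ball.mpr ⟨q, hq⟩
  rcases hz with hz | hz
  · rw [Walk.support_reverse, List.mem_reverse] at hz
    exact key (px.takeUntil z hz) ((px.length_takeUntil_le hz).trans hpx)
  · exact key (py.takeUntil z hz) ((py.length_takeUntil_le hz).trans hpy)

/-- The projection graph homomorphism from the 2-lift to the base graph. -/
def liftProj (G : SimpleGraph V) (σ : Sym2 V → Bool) : twoLift G σ →g G :=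
  ⟨Prod.fst, fun h => h.1⟩


end AuxLemmas

/-- Proposition 2.9.  If `G` is bicycle-free at radius `r` and `G₂` is
the 2-lift of `G` associated to an edge-signing `w : E → {±1}`, then `G₂` is bicycle-free
at radius `r`. -/
theorem twoLift_bicycleFree {V : Type*} [Fintype V] [DecidableEq V]
    (G : SimpleGraph V) (σ : Sym2 V → Bool) (r : ℕ) (h : BicycleFree G r) :
    BicycleFree (twoLift G σ) r := by
  intro pv
  set L := twoLift G σ with hLdef
  set B := ball L pv r with hBdef
  set S := ball G pv.1 r with hSdef
  have hproj : ∀ q ∈ B, q.1 ∈ S := by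
    intro q hq
    obtain ⟨p, hp⟩ := mem_ball.mp hq
    exact mem_ball.mpr ⟨p.map (liftProj G σ), (SimpleGraph.Walk.length_map (liftProj G σ) p).trans_le hp⟩
  set f : V → ℕ := fun u => (B.filter (fun q => q.1 = u)).card with hfdef
  have hcardB : B.card = ∑ u ∈ S, f u := Finset.card_eq_sum_card_fiberwise hproj
  set EB := L.edgeFinset.filter (fun ε => ∀ x ∈ ε, x ∈ B) with hEB
  set ES := G.edgeFinset.filter (fun e => ∀ x ∈ e, x ∈ S) with hES
  have hprojE : ∀ ε ∈ EB, Sym2.map Prod.fst ε ∈ ES := by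
    intro ε hε
    rw [hEB, Finset.mem_filter, SimpleGraph.mem_edgeFinset] at hε
    revert hε
    induction ε using Sym2.ind with
    | _ p q =>
      rintro ⟨hadj, hmem⟩
      rw [SimpleGraph.mem_edgeSet] at hadj
      rw [Sym2.map_pair_eq, hES, Finset.mem_filter, SimpleGraph.mem_edgeFinset]
      refine ⟨G.mem_edgeSet.mpr hadj.1, ?_⟩
      intro x hx
      rcases Sym2.mem_iff.mp hx with rfl | rfl
      · exact hproj p (hmem p (Sym2.mem_iff.mpr (Or.inl rfl)))
      · exact hproj q (hmem q (Sym2.mem_iff.mpr (Or.inr rfl)))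
  have hfib : ∀ a b : V, G.Adj a b →
      (EB.filter (fun ε => Sym2.map Prod.fst ε = s(a, b))).card ≤ f a := by
    intro a b hab
    rw [hfdef]
    apply Finset.card_le_card_of_surjOn
      (fun p : V × Bool => s(p, ((b, xor p.2 (!σ s(a, b))) : V × Bool)))
    intro ε hε
    simp only [Finset.coe_filter, Set.mem_setOf_eq] at hε
    obtain ⟨hε1, hε2⟩ := hε
    rw [hEB, Finset.mem_filter, SimpleGraph.mem_edgeFinset] at hε1
    revert hε1 hε2
    induction ε using Sym2.ind with
    | _ p q =>
      rintro ⟨hadj, hmem⟩ hε2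
      rw [SimpleGraph.mem_edgeSet] at hadj
      have hpB : p ∈ B := hmem p (Sym2.mem_iff.mpr (Or.inl rfl))
      have hqB : q ∈ B := hmem q (Sym2.mem_iff.mpr (Or.inr rfl))
      rw [Sym2.map_pair_eq] at hε2
      rcases Sym2.eq_iff.mp hε2 with ⟨h1, h2⟩ | ⟨h1, h2⟩
      · refine ⟨p, ?_, ?_⟩
        · simp only [Finset.coe_filter, Set.mem_setOf_eq]
          exact ⟨hpB, h1⟩
        · show s(p, ((b, xor p.2 (!σ s(a, b))) : V × Bool)) = s(p, q)
          have hq : ((b, xor p.2 (!σ s(a, b))) : V × Bool) = q := by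
            have hadj2 := hadj.2
            refine Prod.ext ?_ ?_
            · exact h2.symm
            · show xor p.2 (!σ s(a, b)) = q.2
              rw [hadj2, h1, h2]
          rw [hq]
      · refine ⟨q, ?_, ?_⟩
        · simp only [Finset.coe_filter, Set.mem_setOf_eq]
          exact ⟨hqB, h2⟩
        · show s(q, ((b, xor q.2 (!σ s(a, b))) : V × Bool)) = s(p, q)
          have hp : ((b, xor q.2 (!σ s(a, b))) : V × Bool) = p := by
            have hadj2 := (L.adj_symm hadj).2
            refine Prod.ext ?_ ?_
            · exact h1.symm
            · show xor q.2 (!σ s(a, b)) = p.2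
              rw [hadj2, h2, h1]
          rw [hp]
          exact Sym2.eq_swap
  have hfibmin : ∀ e ∈ ES, (EB.filter (fun ε => Sym2.map Prod.fst ε = e)).card ≤ minf f e := by
    intro e he
    rw [hES, Finset.mem_filter, SimpleGraph.mem_edgeFinset] at he
    revert he
    induction e using Sym2.ind with
    | _ a b =>
      rintro ⟨heE, -⟩
      rw [SimpleGraph.mem_edgeSet] at heE
      have h1 : minf f s(a, b) = min (f a) (f b) := rfl
      rw [h1]
      refine le_min (hfib a b heE) ?_
      have hswap : s(a, b) = s(b, a) := Sym2.eq_swap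
      simp only [hswap]
      exact hfib b a heE.symm
  show edgesWithin L B ≤ B.card
  have hEBcard : edgesWithin L B = EB.card := rfl
  rw [hEBcard, hcardB]
  calc EB.card = ∑ e ∈ ES, (EB.filter (fun ε => Sym2.map Prod.fst ε = e)).card :=
        Finset.card_eq_sum_card_fiberwise hprojE
    _ ≤ ∑ e ∈ ES, minf f e := Finset.sum_le_sum hfibmin
    _ ≤ ∑ u ∈ S, f u := key G f S.card S le_rfl (ball_connected G pv.1 r) (h pv.1)


end NearRamanujan
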